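/- arXiv:1511.08447 — 8 statements merged into one kernel-verified Lean document; each statement's English description precedes it below -/
import Mathlib

section
/- Suppose σ = σ₁ ++ σ₂ ++ … ++ σ_k is a legal and quiescent run such that each σ_i (1 ≤ i ≤ k) is a quiescent run. Then every σ_i (1 ≤ i ≤ k) is legal. -/
variable {Op Proc : Type*}

abbrev Ev (Op Proc : Type*) := Op × Proc × Bool

def IsInv (e : Ev Op Proc) : Prop := e.2.2 = true

def EvMatches (e e' : Ev Op Proc) : Prop :=
  e.1 = e'.1 ∧ e.2.1 = e'.2.1 ∧ e.2.2 = true ∧ e'.2.2 = false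

def proj [DecidableEq Proc] (p : Proc) (σ : List (Ev Op Proc)) : List (Ev Op Proc) :=
  σ.filter (fun e => e.2.1 = p)

def SequentialRun (σ : List (Ev Op Proc)) : Prop :=
  σ = [] ∨
    ((∃ h : 0 < σ.length, IsInv (σ[0]'h)) ∧
     (∀ i, i % 2 = 0 → ∀ h : i + 1 < σ.length,
        EvMatches (σ[i]'(Nat.lt_of_succ_lt h)) (σ[i+1]'h)) ∧
     ((σ.length - 1) % 2 = 0 →
        ∃ h : σ.length - 1 < σ.length, IsInv (σ[σ.length - 1]'h)))

def Legal [DecidableEq Proc] (σ : List (Ev Op Proc)) : Prop :=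
  ∀ p : Proc, SequentialRun (proj p σ)

def Quiescent (σ : List (Ev Op Proc)) : Prop :=
  ∀ σ₁ (e : Ev Op Proc) σ₂, σ = σ₁ ++ e :: σ₂ → IsInv e → ∃ e' ∈ σ₂, EvMatches e e'

def ETEQ (σ : List (Ev Op Proc)) : Prop :=
  Quiescent σ ∧ ∀ u, u <+: σ → u ≠ [] → u ≠ σ → ¬ Quiescent u

lemma seq_take (σ : List (Ev Op Proc)) (n : ℕ) (hs : SequentialRun σ) :
    SequentialRun (σ.take n) := by
  rcases hs with h | ⟨⟨h0, hinv⟩, hm, hl⟩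
  · left; simp [h]
  by_cases hn : σ.take n = []
  · left; exact hn
  right
  have hlen : (σ.take n).length ≤ σ.length := by simp [List.length_take]
  have hpos : 0 < (σ.take n).length := List.length_pos_iff.mpr hn
  refine ⟨⟨hpos, ?_⟩, ?_, ?_⟩
  · rw [List.getElem_take]; exact hinv
  · intro i hi h
    rw [List.getElem_take, List.getElem_take]
    exact hm i hi (h.trans_le hlen)
  · intro hev
    refine ⟨by omega, ?_⟩
    rw [List.getElem_take]
    by_cases hj1 : (σ.take n).length - 1 + 1 < σ.length
    · exact (hm _ hev hj1).2.2.1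
    · have heq : (σ.take n).length - 1 = σ.length - 1 := by omega
      obtain ⟨_, hv⟩ := hl (by omega)
      simp only [heq]
      exact hv

lemma seq_drop (σ : List (Ev Op Proc)) (n : ℕ) (hn : n % 2 = 0) (hs : SequentialRun σ) :
    SequentialRun (σ.drop n) := by
  rcases hs with h | ⟨⟨h0, hinv⟩, hm, hl⟩
  · left; simp [h]
  by_cases hd : σ.drop n = []
  · left; exact hd
  right
  have hdl : (σ.drop n).length = σ.length - n := by simp
  have hlt : n < σ.length := by
    by_contra h; push_neg at h
    exact hd (List.drop_eq_nil_of_le h)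
  have hpos : 0 < (σ.drop n).length := List.length_pos_iff.mpr hd
  refine ⟨⟨hpos, ?_⟩, ?_, ?_⟩
  · rw [List.getElem_drop]
    by_cases hn1 : n + 1 < σ.length
    · exact (hm n hn hn1).2.2.1
    · have he : n = σ.length - 1 := by omega
      have := hl (by omega)
      obtain ⟨_, hv⟩ := this
      simpa [← he] using hv
  · intro i hi h
    rw [List.getElem_drop, List.getElem_drop]
    have : (n + i) % 2 = 0 := by omega
    have hmm := hm (n + i) this (by omega)
    convert hmm using 2 <;> omega
  · intro hev
    refine ⟨by omega, ?_⟩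
    rw [List.getElem_drop]
    have hje : n + ((σ.drop n).length - 1) = σ.length - 1 := by omega
    have : (σ.length - 1) % 2 = 0 := by omega
    obtain ⟨_, hv⟩ := hl this
    simp only [hje]
    exact hv

lemma filter_last_decomp {α : Type*} (q : α → Bool) :
    ∀ (σ l : List α) (e : α), σ.filter q = l ++ [e] →
      ∃ σ₁ σ₂, σ = σ₁ ++ e :: σ₂ ∧ σ₂.filter q = [] := by
  intro σ
  induction σ using List.reverseRecOn with
  | nil => intro l e h; simp at h
  | append_singleton σ' a ih =>
    intro l e h
    rw [List.filter_append] at h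
    by_cases hq : q a
    · simp [hq] at h
      refine ⟨σ', [], ?_, rfl⟩
      have : e = a := by
        exact h.2.symm
      rw [this]
    · simp [hq] at h
      obtain ⟨σ₁, σ₂, h1, h2⟩ := ih l e h
      exact ⟨σ₁, σ₂ ++ [a], by simp [h1], by simp [List.filter_append, h2, hq]⟩

lemma proj_len_even [DecidableEq Proc] (p : Proc) (σ : List (Ev Op Proc))
    (hq : Quiescent σ) (hs : SequentialRun (proj p σ)) :
    (proj p σ).length % 2 = 0 := by
  by_contra hodd
  rcases hs with h | ⟨_, _, hl⟩
  · simp [h] at hodd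
  have hev : ((proj p σ).length - 1) % 2 = 0 := by omega
  obtain ⟨hlt, hv⟩ := hl hev
  have hne : proj p σ ≠ [] := by intro h; rw [h] at hlt; simp at hlt
  have hlast : proj p σ = (proj p σ).dropLast ++ [(proj p σ).getLast hne] :=
    (List.dropLast_append_getLast hne).symm
  obtain ⟨σ₁, σ₂, hσ, hσ₂⟩ := filter_last_decomp (fun e => decide (e.2.1 = p)) σ
    (proj p σ).dropLast ((proj p σ).getLast hne) (by simpa [proj] using hlast)
  have hgv : IsInv ((proj p σ).getLast hne) := by
    rw [List.getLast_eq_getElem]; exact hv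
  obtain ⟨e', he'mem, he'm⟩ := hq σ₁ _ σ₂ hσ hgv
  have hep : ((proj p σ).getLast hne).2.1 = p := by
    have hmem : (proj p σ).getLast hne ∈ proj p σ := List.getLast_mem hne
    simp only [proj, List.mem_filter] at hmem
    exact of_decide_eq_true hmem.2
  have he'p : e'.2.1 = p := by rw [← he'm.2.1]; exact hep
  have hmem2 : e' ∈ σ₂.filter (fun e => decide (e.2.1 = p)) :=
    List.mem_filter.mpr ⟨he'mem, by simp [he'p]⟩
  rw [hσ₂] at hmem2
  simp at hmem2

lemma quiescent_suffix (σ₀ rest : List (Ev Op Proc)) (hq : Quiescent (σ₀ ++ rest)) :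
    Quiescent rest := by
  intro σ₁ e σ₂ h hi
  exact hq (σ₀ ++ σ₁) e σ₂ (by simp [h]) hi

theorem legal_of_quiescent_pieces' [DecidableEq Proc]
    (L : List (List (Ev Op Proc)))
    (hlegal : ∀ p : Proc, SequentialRun (proj p L.flatten)) (hquies : Quiescent L.flatten)
    (hpieces : ∀ σi ∈ L, Quiescent σi) :
    ∀ σi ∈ L, ∀ p : Proc, SequentialRun (proj p σi) := by
  induction L with
  | nil => intro σi h; simp at h
  | cons σ₀ L' ih =>
    have hflat : (σ₀ :: L').flatten = σ₀ ++ L'.flatten := by simp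
    rw [hflat] at hlegal hquies
    have hq0 : Quiescent σ₀ := hpieces σ₀ (by simp)
    have hleg0 : ∀ p, SequentialRun (proj p σ₀) := by
      intro p
      have hp : proj p σ₀ = (proj p (σ₀ ++ L'.flatten)).take (proj p σ₀).length := by
        simp [proj, List.filter_append, List.take_left]
      rw [hp]
      exact seq_take _ _ (hlegal p)
    have hlegR : ∀ p, SequentialRun (proj p L'.flatten) := by
      intro p
      have hp : proj p L'.flatten = (proj p (σ₀ ++ L'.flatten)).drop (proj p σ₀).length := by
        simp [proj, List.filter_append, List.drop_left]
      rw [hp]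
      exact seq_drop _ _ (proj_len_even p σ₀ hq0 (hleg0 p)) (hlegal p)
    have hqR : Quiescent L'.flatten := quiescent_suffix σ₀ _ hquies
    intro σi hmem
    rcases List.mem_cons.mp hmem with rfl | hmem'
    · exact hleg0
    · exact ih hlegR hqR (fun σ h => hpieces σ (by simp [h])) σi hmem'

/-- If σ = σ₁ ++ … ++ σ_k is a legal and quiescent run and each σᵢ is quiescent,
then every σᵢ is legal. -/
theorem legal_of_quiescent_pieces [DecidableEq Proc]
    (L : List (List (Ev Op Proc)))
    (hlegal : Legal L.flatten) (hquies : Quiescent L.flatten)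
    (hpieces : ∀ σi ∈ L, Quiescent σi) :
    ∀ σi ∈ L, Legal σi :=
  legal_of_quiescent_pieces' L hlegal hquies hpieces
end

section
/- If σ is a legal quiescent run, σ' is a permutation of σ (List.Perm), and σ' is legal, then σ' is quiescent. -/
variable {Op Proc : Type*}

lemma filter_eq_concat_split {α : Type*} (q : α → Bool) :
    ∀ (l l' : List α) (e : α), l.filter q = l' ++ [e] →
      ∃ l₁ l₂, l = l₁ ++ e :: l₂ ∧ l₂.filter q = [] := by
  intro l
  induction l using List.reverseRecOn with
  | nil => intro l' e h; simp at h
  | append_singleton init a ih =>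
    intro l' e h
    rw [List.filter_append] at h
    by_cases ha : q a
    · simp only [List.filter_cons, List.filter_nil, ha, if_true] at h
      obtain ⟨h1, h2⟩ := List.append_inj' h rfl
      have hae : a = e := by simpa using h2
      exact ⟨init, [], by rw [hae], rfl⟩
    · simp only [List.filter_cons, List.filter_nil, ha, Bool.false_eq_true, if_false, List.append_nil] at h
      obtain ⟨l₁, l₂, rfl, hf⟩ := ih l' e h
      exact ⟨l₁, l₂ ++ [a], by simp, by simp [List.filter_append, hf, ha]⟩

lemma even_proj_of_quiescent [DecidableEq Proc]
    (σ : List (Ev Op Proc)) (hlegal : Legal σ) (hquies : Quiescent σ) (p : Proc) :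
    Even (proj p σ).length := by
  by_contra hodd
  rw [Nat.not_even_iff_odd] at hodd
  have hne : proj p σ ≠ [] := by intro h; rw [h] at hodd; simp at hodd
  rcases hlegal p with h0 | ⟨_, _, hlast⟩
  · exact hne h0
  have hmod : ((proj p σ).length - 1) % 2 = 0 := by
    obtain ⟨m, hm⟩ := hodd; omega
  obtain ⟨h, hinv⟩ := hlast hmod
  have hsplit : proj p σ = (proj p σ).dropLast ++ [(proj p σ)[(proj p σ).length - 1]'h] := by
    conv_lhs => rw [← List.dropLast_append_getLast hne]
    rw [List.getLast_eq_getElem]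
  obtain ⟨σ₁, σ₂, hσ, hf2⟩ := filter_eq_concat_split (fun e => decide (e.2.1 = p)) σ
    ((proj p σ).dropLast) ((proj p σ)[(proj p σ).length - 1]'h) (by rw [← hsplit]; rfl)
  obtain ⟨e', he'mem, he'match⟩ := hquies σ₁ _ σ₂ hσ hinv
  have hep : ((proj p σ)[(proj p σ).length - 1]'h).2.1 = p := by
    have hm := List.getElem_mem h
    have := List.mem_filter.mp hm
    simpa using this.2
  have he'p : e'.2.1 = p := by rw [← he'match.2.1]; exact hep
  have : e' ∈ σ₂.filter (fun e => decide (e.2.1 = p)) :=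
    List.mem_filter.mpr ⟨he'mem, by simp [he'p]⟩
  rw [hf2] at this
  simp at this

lemma quiescent_of_even_proj [DecidableEq Proc]
    (σ : List (Ev Op Proc)) (hlegal : Legal σ)
    (heven : ∀ p : Proc, Even (proj p σ).length) :
    Quiescent σ := by
  intro σ₁ e σ₂ hσ hinv
  have hproj : proj e.2.1 σ = proj e.2.1 σ₁ ++ e :: proj e.2.1 σ₂ := by
    simp [proj, hσ, List.filter_append]
  have hs := hlegal e.2.1
  have hev := heven e.2.1
  rw [hproj] at hs hev
  set a := proj e.2.1 σ₁ with ha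
  set b := proj e.2.1 σ₂ with hb
  rcases hs with h0 | ⟨_, hmatch, _⟩
  · simp at h0
  have hklt : a.length < (a ++ e :: b).length := by simp
  have hτk : (a ++ e :: b)[a.length]'hklt = e := by
    rw [List.getElem_append_right (le_refl a.length)]
    simp
  have hkeven : a.length % 2 = 0 := by
    by_contra hko
    have hk1 : a.length % 2 = 1 := by omega
    have hkpos : 0 < a.length := by omega
    have hj : (a.length - 1) % 2 = 0 := by omega
    have hjh : (a.length - 1) + 1 < (a ++ e :: b).length := by simp; omega
    have hfalse := (hmatch (a.length - 1) hj hjh).2.2.2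
    have hkk : a.length - 1 + 1 = a.length := by omega
    simp_rw [hkk] at hfalse
    rw [hτk] at hfalse
    rw [IsInv] at hinv
    simp_all
  have hk1lt : a.length + 1 < (a ++ e :: b).length := by
    simp only [List.length_append, List.length_cons] at hev ⊢
    obtain ⟨m, hm⟩ := hev
    omega
  have hm := hmatch a.length hkeven hk1lt
  rw [hτk] at hm
  have hb0 : 0 < b.length := by simp at hk1lt; omega
  have hτk1 : (a ++ e :: b)[a.length + 1]'hk1lt = b[0]'hb0 := by
    rw [List.getElem_append_right (by omega : a.length ≤ a.length + 1)]
    simp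
  rw [hτk1] at hm
  have hmemb : b[0]'hb0 ∈ b := List.getElem_mem hb0
  have : b[0]'hb0 ∈ σ₂ := (List.mem_filter.mp hmemb).1
  exact ⟨_, this, hm⟩

/-- Any legal permutation of a legal quiescent run is quiescent. -/
theorem quiescent_of_legal_perm [DecidableEq Proc]
    (σ σ' : List (Ev Op Proc)) (hlegal : Legal σ) (hquies : Quiescent σ)
    (hperm : σ.Perm σ') (hlegal' : Legal σ') :
    Quiescent σ' := by
  apply quiescent_of_even_proj σ' hlegal'
  intro p
  have : (proj p σ).length = (proj p σ').length :=
    (hperm.filter _).length_eq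
  rw [← this]
  exact even_proj_of_quiescent σ hlegal hquies p
end

section
/- Let M be an NFA over the event alphabet Σ and let q₀ be a designated initial state. Assume: (i) every word w over Σ with M.evalFrom {q₀} w nonempty is legal; and (ii) for every word w and every state q ∈ M.evalFrom {q₀} w there exists a word w' such that M.evalFrom {q} w' is nonempty and w ++ w' is quiescent. Then for every state q: if some quiescent word w satisfies q ∈ M.evalFrom {q₀} w, then every word u with q ∈ M.evalFrom {q₀} u is quiescent. -/
variable {Op Proc : Type*}

section Aux
variable [DecidableEq Proc]
set_option linter.unusedSectionVars false

theorem evalFrom_mono {A S : Type*} (M : NFA A S) {T T' : Set S} (h : T ⊆ T') :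
    ∀ w, M.evalFrom T w ⊆ M.evalFrom T' w := by
  intro w
  induction w generalizing T T' with
  | nil => simpa using h
  | cons a w ih =>
    show M.evalFrom (M.stepSet T a) w ⊆ M.evalFrom (M.stepSet T' a) w
    apply ih
    intro s hs
    rw [NFA.mem_stepSet] at hs ⊢
    obtain ⟨t, ht, hst⟩ := hs
    exact ⟨t, h ht, hst⟩

theorem seq_even_inv {l : List (Ev Op Proc)} (h : SequentialRun l) {i : ℕ}
    (hi : i < l.length) (he : i % 2 = 0) : (l[i]'hi).2.2 = true := by
  rcases h with rfl | ⟨_, hmatch, hlast⟩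
  · simp at hi
  · by_cases h1 : i + 1 < l.length
    · exact (hmatch i he h1).2.2.1
    · have : i = l.length - 1 := by omega
      subst this
      obtain ⟨_, hinv⟩ := hlast he
      exact hinv

theorem seq_odd_resp {l : List (Ev Op Proc)} (h : SequentialRun l) {i : ℕ}
    (hi : i < l.length) (he : i % 2 = 1) : (l[i]'hi).2.2 = false := by
  rcases h with rfl | ⟨_, hmatch, _⟩
  · simp at hi
  · obtain ⟨j, rfl⟩ : ∃ j, i = j + 1 := ⟨i - 1, by omega⟩
    exact (hmatch j (by omega) hi).2.2.2

theorem proj_append (p : Proc) (a b : List (Ev Op Proc)) :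
    proj p (a ++ b) = proj p a ++ proj p b := List.filter_append ..

theorem mem_proj_of_proc {p : Proc} {e : Ev Op Proc} {σ : List (Ev Op Proc)}
    (h : e ∈ σ) (hp : e.2.1 = p) : e ∈ proj p σ := by
  rw [proj, List.mem_filter]
  exact ⟨h, by simp [hp]⟩

theorem proc_of_mem_proj {p : Proc} {e : Ev Op Proc} {σ : List (Ev Op Proc)}
    (h : e ∈ proj p σ) : e.2.1 = p := by
  rw [proj, List.mem_filter] at h
  simpa using h.2

-- decompose around the last p-event

theorem last_decomp (p : Proc) :
    ∀ (w : List (Ev Op Proc)) (h : proj p w ≠ []),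
      ∃ σ₁ σ₂, w = σ₁ ++ (proj p w).getLast h :: σ₂ ∧ proj p σ₂ = [] := by
  intro w
  induction w using List.reverseRecOn with
  | nil => intro h; simp [proj] at h
  | append_singleton ws a ih =>
    intro h
    by_cases ha : a.2.1 = p
    · refine ⟨ws, [], ?_, by simp [proj, List.filter_eq_nil_iff]⟩
      have hpr : proj p (ws ++ [a]) = proj p ws ++ [a] := by
        rw [proj_append]; simp [proj, ha]
      simp [hpr]
    · have hpr : proj p (ws ++ [a]) = proj p ws := by
        rw [proj_append]
        have : proj p [a] = [] := by simp [proj, ha]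
        simp [this]
      have h' : proj p ws ≠ [] := by rw [hpr] at h; exact h
      obtain ⟨σ₁, σ₂, hw, hσ₂⟩ := ih h'
      refine ⟨σ₁, σ₂ ++ [a], ?_, ?_⟩
      · have : (proj p (ws ++ [a])).getLast h = (proj p ws).getLast h' := by
          congr 1
        rw [this]; conv_lhs => rw [hw]
        simp
      · rw [proj_append, hσ₂]; simp [proj, ha]

theorem quiescent_even {w : List (Ev Op Proc)}
    (hleg : ∀ p, SequentialRun (proj p w)) (hq : Quiescent w) (p : Proc) :
    (proj p w).length % 2 = 0 := by
  by_contra hodd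
  have hne : proj p w ≠ [] := by intro h; rw [h] at hodd; simp at hodd
  have hlen : 0 < (proj p w).length := List.length_pos_iff.mpr hne
  rcases hleg p with hnil | ⟨_, _, hlast⟩
  · exact hne hnil
  · obtain ⟨hlt, hinv⟩ := hlast (by omega)
    obtain ⟨σ₁, σ₂, hw, hσ₂⟩ := last_decomp p w hne
    have hinv' : IsInv ((proj p w).getLast hne) := by
      rw [(proj p w).getLast_eq_getElem hne]; exact hinv
    obtain ⟨e', he'mem, he'match⟩ := hq σ₁ _ σ₂ hw hinv'
    have hep : ((proj p w).getLast hne).2.1 = p :=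
      proc_of_mem_proj (List.getLast_mem hne)
    have : e' ∈ proj p σ₂ := mem_proj_of_proc he'mem (he'match.2.1 ▸ hep)
    rw [hσ₂] at this
    simp at this

-- auxiliary lemmas

theorem head_resp_of_odd {A B : List (Ev Op Proc)} (hB : B ≠ [])
    (hseq : SequentialRun (A ++ B)) (hodd : A.length % 2 = 1) :
    (B[0]'(List.length_pos_iff.mpr hB)).2.2 = false := by
  have h0 : 0 < B.length := List.length_pos_iff.mpr hB
  have hlt : A.length < (A ++ B).length := by simp; omega
  have he : (A ++ B)[A.length]'hlt = B[0]'h0 := by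
    rw [List.getElem_append_right (le_refl _)]
    simp
  rw [← he]; exact seq_odd_resp hseq hlt hodd

theorem head_inv_of_even {A B : List (Ev Op Proc)} (hB : B ≠ [])
    (hseq : SequentialRun (A ++ B)) (heven : A.length % 2 = 0) :
    (B[0]'(List.length_pos_iff.mpr hB)).2.2 = true := by
  have h0 : 0 < B.length := List.length_pos_iff.mpr hB
  have hlt : A.length < (A ++ B).length := by simp; omega
  have he : (A ++ B)[A.length]'hlt = B[0]'h0 := by
    rw [List.getElem_append_right (le_refl _)]
    simp
  rw [← he]; exact seq_even_inv hseq hlt heven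

theorem pending_odd {u σ₁ σ₂ : List (Ev Op Proc)} {e : Ev Op Proc}
    (hseq : SequentialRun (proj e.2.1 u)) (hu : u = σ₁ ++ e :: σ₂)
    (hinv : IsInv e) (hnom : ¬ ∃ e' ∈ σ₂, EvMatches e e') :
    (proj e.2.1 u).length % 2 = 1 := by
  have hsplit : proj e.2.1 u = proj e.2.1 σ₁ ++ e :: proj e.2.1 σ₂ := by
    rw [hu, proj_append]
    congr 1
    simp [proj, List.filter_cons]
  have hilt : (proj e.2.1 σ₁).length < (proj e.2.1 u).length := by
    rw [hsplit]; simp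
  have hei : (proj e.2.1 u)[(proj e.2.1 σ₁).length]'hilt = e := by
    simp only [hsplit]
    rw [List.getElem_append_right (le_refl _)]
    simp
  have hi0 : (proj e.2.1 σ₁).length % 2 = 0 := by
    rcases Nat.mod_two_eq_zero_or_one (proj e.2.1 σ₁).length with h | h
    · exact h
    · exfalso
      have := seq_odd_resp hseq hilt h
      rw [hei] at this
      rw [IsInv] at hinv
      rw [hinv] at this
      exact Bool.true_eq_false.mp this
  rcases hseq with hnil | ⟨_, hmatch, _⟩
  · rw [hnil] at hilt; simp at hilt
  · by_cases h1 : (proj e.2.1 σ₁).length + 1 < (proj e.2.1 u).length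
    · exfalso
      have hm := hmatch _ hi0 h1
      rw [hei] at hm
      have hmem : (proj e.2.1 u)[(proj e.2.1 σ₁).length + 1]'h1 ∈ proj e.2.1 σ₂ := by
        have h2 : (proj e.2.1 u)[(proj e.2.1 σ₁).length + 1]'h1 =
            (proj e.2.1 σ₂)[0]'(by
              have := h1; rw [hsplit] at this; simp at this; omega) := by
          simp only [hsplit]
          rw [List.getElem_append_right (by omega)]
          simp
        rw [h2]; exact List.getElem_mem _
      exact hnom ⟨_, List.mem_of_mem_filter hmem, hm⟩
    · have : (proj e.2.1 u).length = (proj e.2.1 σ₁).length + 1 := by omega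
      omega

end Aux

/-- If every word reachable from q₀ is legal, and every reachable configuration can be
extended to a quiescent word, then any state reached by some quiescent word is reached
only by quiescent words. -/
theorem quiescent_states_well_defined [DecidableEq Proc] {S : Type*}
    (M : NFA (Ev Op Proc) S) (q₀ : S)
    (hlegal : ∀ w : List (Ev Op Proc), (M.evalFrom {q₀} w).Nonempty → Legal w)
    (hcomplete : ∀ (w : List (Ev Op Proc)) (q : S), q ∈ M.evalFrom {q₀} w →
      ∃ w' : List (Ev Op Proc), (M.evalFrom {q} w').Nonempty ∧ Quiescent (w ++ w')) :
    ∀ q : S, (∃ w : List (Ev Op Proc), Quiescent w ∧ q ∈ M.evalFrom {q₀} w) →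
      ∀ u : List (Ev Op Proc), q ∈ M.evalFrom {q₀} u → Quiescent u := by
  rintro q ⟨w, hwq, hwreach⟩ u hureach σ₁ e σ₂ hu hinv
  by_contra hnom
  have hu_legal : Legal u := hlegal u ⟨q, hureach⟩
  have hw_legal : Legal w := hlegal w ⟨q, hwreach⟩
  obtain ⟨w', hne, hquw'⟩ := hcomplete u q hureach
  have happ : ∀ a b : List (Ev Op Proc),
      M.evalFrom {q₀} (a ++ b) = M.evalFrom (M.evalFrom {q₀} a) b := by
    intro a b; simp [NFA.evalFrom, List.foldl_append]
  have hsubu : M.evalFrom {q} w' ⊆ M.evalFrom {q₀} (u ++ w') := by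
    rw [happ]
    exact evalFrom_mono M (Set.singleton_subset_iff.mpr hureach) w'
  have hsubw : M.evalFrom {q} w' ⊆ M.evalFrom {q₀} (w ++ w') := by
    rw [happ]
    exact evalFrom_mono M (Set.singleton_subset_iff.mpr hwreach) w'
  have huw'_legal : Legal (u ++ w') := hlegal _ (hne.mono hsubu)
  have hww'_legal : Legal (w ++ w') := hlegal _ (hne.mono hsubw)
  have hA : (proj e.2.1 u).length % 2 = 1 := pending_odd (hu_legal e.2.1) hu hinv hnom
  have hC : (proj e.2.1 w).length % 2 = 0 := quiescent_even hw_legal hwq e.2.1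
  have hBne : proj e.2.1 w' ≠ [] := by
    obtain ⟨e', he'mem, he'm⟩ := hquw' σ₁ e (σ₂ ++ w') (by rw [hu]; simp) hinv
    rcases List.mem_append.mp he'mem with h | h
    · exact absurd ⟨e', h, he'm⟩ hnom
    · exact List.ne_nil_of_mem (mem_proj_of_proc h he'm.2.1.symm)
  have hfalse := head_resp_of_odd hBne (by
      have := huw'_legal e.2.1
      rwa [proj_append] at this) hA
  have htrue := head_inv_of_even hBne (by
      have := hww'_legal e.2.1
      rwa [proj_append] at this) hC
  rw [hfalse] at htrue
  exact Bool.false_ne_true htrue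
end

section
/- For all runs σ and σ' over the event alphabet Σ: σ ~_R σ' if and only if π_p(σ) = π_p(σ') for every process p. (Projection characterisation of the trace equivalence generated by the independence relation R that relates exactly the pairs of events with distinct processes.) -/
variable {Op Proc : Type*}

/-- One swap of two adjacent letters related by the independence relation I. -/
inductive SwapStep {A : Type*} (I : A → A → Prop) : List A → List A → Prop
  | swap (u v : List A) (a b : A) : I a b → SwapStep I (u ++ a :: b :: v) (u ++ b :: a :: v)

/-- The independence relation R: two events are independent iff their processes differ. -/
def IndepR (a b : Ev Op Proc) : Prop := a.2.1 ≠ b.2.1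


lemma swapStep_cons {A : Type*} {I : A → A → Prop} {l l' : List A} (x : A)
    (h : SwapStep I l l') : SwapStep I (x :: l) (x :: l') := by
  cases h with
  | swap u v a b hab =>
    have := SwapStep.swap (I := I) (x :: u) v a b hab
    simpa using this

lemma rtg_cons {A : Type*} {I : A → A → Prop} {l l' : List A} (x : A)
    (h : Relation.ReflTransGen (SwapStep I) l l') :
    Relation.ReflTransGen (SwapStep I) (x :: l) (x :: l') := by
  induction h with
  | refl => exact Relation.ReflTransGen.refl
  | tail _ hs ih => exact ih.tail (swapStep_cons x hs)

lemma proj_swapStep [DecidableEq Proc] {σ τ : List (Ev Op Proc)}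
    (h : SwapStep (IndepR (Op := Op) (Proc := Proc)) σ τ) (p : Proc) :
    proj p σ = proj p τ := by
  cases h with
  | swap u v a b hab =>
    simp only [proj, List.filter_append, List.filter_cons]
    by_cases ha : a.2.1 = p <;> by_cases hb : b.2.1 = p
    · exact absurd (ha.trans hb.symm) hab
    all_goals simp [ha, hb]

lemma filter_eq_cons' {A : Type*} (P : A → Bool) :
    ∀ (σ : List A) (a : A) (l : List A), σ.filter P = a :: l →
      ∃ u v, σ = u ++ a :: v ∧ (∀ e ∈ u, ¬ P e) ∧ v.filter P = l := by
  intro σ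
  induction σ with
  | nil => intro a l h; simp at h
  | cons x t ih =>
    intro a l h
    by_cases hx : P x
    · rw [List.filter_cons_of_pos hx] at h
      obtain ⟨rfl, rfl⟩ : x = a ∧ t.filter P = l := by
        constructor <;> [exact (List.cons.injEq ..▸ h).1; exact (List.cons.injEq ..▸ h).2]
      exact ⟨[], t, by simp, by simp, rfl⟩
    · rw [List.filter_cons_of_neg hx] at h
      obtain ⟨u, v, rfl, hu, hv⟩ := ih a l h
      exact ⟨x :: u, v, by simp, by simpa [hx] using hu, hv⟩

lemma bubble [DecidableEq Proc] :
    ∀ (u : List (Ev Op Proc)) (a : Ev Op Proc) (v : List (Ev Op Proc)),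
      (∀ e ∈ u, e.2.1 ≠ a.2.1) →
      Relation.ReflTransGen (SwapStep (IndepR (Op := Op) (Proc := Proc)))
        (u ++ a :: v) (a :: (u ++ v)) := by
  intro u
  induction u with
  | nil => intro a v _; simp only [List.nil_append]; exact Relation.ReflTransGen.refl
  | cons b t ih =>
    intro a v hu
    have h1 : Relation.ReflTransGen (SwapStep (IndepR (Op := Op) (Proc := Proc)))
        (b :: (t ++ a :: v)) (b :: (a :: (t ++ v))) :=
      rtg_cons b (ih a v (fun e he => hu e (List.mem_cons_of_mem _ he)))
    have h2 : SwapStep (IndepR (Op := Op) (Proc := Proc))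
        ([] ++ b :: a :: (t ++ v)) ([] ++ a :: b :: (t ++ v)) :=
      SwapStep.swap [] (t ++ v) b a (hu b List.mem_cons_self)
    have h1' : Relation.ReflTransGen (SwapStep (IndepR (Op := Op) (Proc := Proc)))
        ((b :: t) ++ a :: v) (b :: a :: (t ++ v)) := by simpa using h1
    have := h1'.trans (Relation.ReflTransGen.single (show SwapStep _ _ _ by simpa using h2))
    simpa using this


/-- σ ~_R σ' iff the per-process projections of σ and σ' agree. -/
theorem traceEquivR_iff_proj_eq [DecidableEq Proc]
    (σ σ' : List (Ev Op Proc)) :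
    Relation.ReflTransGen (SwapStep (IndepR (Op := Op) (Proc := Proc))) σ σ' ↔
      ∀ p : Proc, proj p σ = proj p σ' := by
  constructor
  · intro h p
    induction h with
    | refl => rfl
    | tail _ hs ih => exact ih.trans (proj_swapStep hs p)
  · intro hproj
    induction σ' generalizing σ with
    | nil =>
      have : σ = [] := by
        cases σ with
        | nil => rfl
        | cons e t =>
          have := hproj e.2.1
          simp [proj, List.filter_cons] at this
      subst this; exact Relation.ReflTransGen.refl
    | cons a t ih =>
      have ha : proj a.2.1 σ = a :: proj a.2.1 t := by
        simpa [proj, List.filter_cons] using hproj a.2.1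
      obtain ⟨u, v, rfl, hu, hv⟩ := filter_eq_cons' _ σ a (proj a.2.1 t) ha
      have hu' : ∀ e ∈ u, e.2.1 ≠ a.2.1 := by
        intro e he h; exact hu e he (by simp [h])
      have step1 := bubble u a v hu'
      have hproj' : ∀ p, proj p (u ++ v) = proj p t := by
        intro p
        by_cases hp : p = a.2.1
        · subst hp
          have h2 : proj a.2.1 (u ++ v) = proj a.2.1 v := by
            simp only [proj, List.filter_append]
            rw [List.filter_eq_nil_iff.2 (by intro e he; simpa using hu' e he), List.nil_append]
          rw [h2]; exact hv
        · have h3 := hproj p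
          simp only [proj, List.filter_append, List.filter_cons] at h3 ⊢
          have hne : ¬(decide (a.2.1 = p) = true) := by
            simpa using fun h : a.2.1 = p => hp h.symm
          simp only [if_neg hne] at h3
          exact h3
      exact step1.trans (rtg_cons a (ih (u ++ v) hproj'))
end

section
/- Assume the process type Proc is nonempty. Let u₁, …, u_m (m ≥ 1) be δ-free words over Σ_δ and let σ = u₁ ++ [δ] ++ u₂ ++ [δ] ++ … ++ [δ] ++ u_m. Then for every word σ' over Σ_δ: σ' ≈ σ if and only if σ' = u'₁ ++ [δ] ++ u'₂ ++ [δ] ++ … ++ [δ] ++ u'_m for some δ-free words u'₁, …, u'_m such that π_p(u'_j) = π_p(u_j) for every process p and every 1 ≤ j ≤ m. -/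
variable {Op Proc : Type*}

/-- The alphabet Σ_δ: events together with a fresh quiescence symbol δ. -/
abbrev EvD (Op Proc : Type*) := Ev Op Proc ⊕ Unit

/-- The quiescence symbol δ. -/
def dd : EvD Op Proc := Sum.inr ()

/-- π_p^δ: keep all δ's and the events of process p. -/
def projD [DecidableEq Proc] (p : Proc) (w : List (EvD Op Proc)) : List (EvD Op Proc) :=
  w.filter (fun x => Sum.elim (fun e : Ev Op Proc => decide (e.2.1 = p)) (fun _ => true) x)

/-- The word u₁ ++ [δ] ++ u₂ ++ [δ] ++ … ++ [δ] ++ u_m built from δ-free blocks. -/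
def interδ (L : List (List (Ev Op Proc))) : List (EvD Op Proc) :=
  List.intercalate [dd] (L.map (List.map Sum.inl))

section Aux

variable [DecidableEq Proc]

lemma interδ_nil : interδ ([] : List (List (Ev Op Proc))) = [] := rfl

lemma interδ_single (u : List (Ev Op Proc)) : interδ [u] = u.map Sum.inl := by
  simp [interδ, List.intercalate]

lemma interδ_cons₂ (u v : List (Ev Op Proc)) (L : List (List (Ev Op Proc))) :
    interδ (u :: v :: L) = u.map Sum.inl ++ dd :: interδ (v :: L) := by
  simp [interδ, List.intercalate, List.intersperse]

lemma projD_append (p : Proc) (a b : List (EvD Op Proc)) :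
    projD p (a ++ b) = projD p a ++ projD p b := List.filter_append ..

lemma projD_cons_dd (p : Proc) (w : List (EvD Op Proc)) :
    projD p (dd :: w) = dd :: projD p w := by
  simp [projD, dd, List.filter_cons]

lemma projD_map_inl (p : Proc) (a : List (Ev Op Proc)) :
    projD p (a.map Sum.inl) = (proj p a).map Sum.inl := by
  induction a with
  | nil => rfl
  | cons e t ih =>
      by_cases h : e.2.1 = p <;> simp [projD, proj, h] at ih ⊢ <;>
        simpa [projD, proj] using ih

lemma dd_not_mem_map_inl (a : List (Ev Op Proc)) : dd ∉ a.map Sum.inl := by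
  simp [dd]

lemma dd_mem_projD {p : Proc} {w : List (EvD Op Proc)} (h : dd ∈ w) :
    dd ∈ projD p w := List.mem_filter.2 ⟨h, by simp [dd]⟩

lemma mem_of_mem_projD {p : Proc} {w : List (EvD Op Proc)} {x : EvD Op Proc}
    (h : x ∈ projD p w) : x ∈ w := List.mem_of_mem_filter h

lemma ddfree_eq_map_inl {w : List (EvD Op Proc)} (h : dd ∉ w) :
    ∃ a : List (Ev Op Proc), w = a.map Sum.inl := by
  induction w with
  | nil => exact ⟨[], rfl⟩
  | cons x t ih =>
      obtain ⟨a, ha⟩ := ih (fun hm => h (List.mem_cons_of_mem _ hm))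
      cases x with
      | inl e => exact ⟨e :: a, by simp [ha]⟩
      | inr u => cases u; exact absurd (List.mem_cons_self) h

lemma first_split {w : List (EvD Op Proc)} (h : dd ∈ w) :
    ∃ a b, w = a ++ dd :: b ∧ dd ∉ a := by
  induction w with
  | nil => simp at h
  | cons x t ih =>
      by_cases hx : x = dd
      · exact ⟨[], t, by simp [hx], by simp⟩
      · rcases List.mem_cons.1 h with h' | h'
        · exact absurd h'.symm hx
        · obtain ⟨a, b, hab, hna⟩ := ih h'
          refine ⟨x :: a, b, by simp [hab], ?_⟩
          intro hm
          rcases List.mem_cons.1 hm with h'' | h''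
          · exact hx h''.symm
          · exact hna h''

lemma split_unique {α : Type*} {x : α} :
    ∀ {a c b d : List α}, a ++ x :: b = c ++ x :: d → x ∉ a → x ∉ c →
      a = c ∧ b = d := by
  intro a
  induction a with
  | nil =>
      intro c b d h _ hc
      cases c with
      | nil => simpa using h
      | cons y t =>
          simp at h
          exact absurd (h.1 ▸ List.mem_cons_self) (h.1 ▸ hc)
  | cons y t ih =>
      intro c b d h ha hc
      cases c with
      | nil =>
          simp at h
          exact absurd (h.1 ▸ List.mem_cons_self) (h.1 ▸ ha)
      | cons z s =>
          simp only [List.cons_append, List.cons.injEq] at h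
          obtain ⟨h1, h2⟩ := h
          obtain ⟨h3, h4⟩ := ih h2 (fun hm => ha (List.mem_cons_of_mem _ hm))
            (fun hm => hc (List.mem_cons_of_mem _ hm))
          exact ⟨by simp [h1, h3], h4⟩

lemma projD_interδ (p : Proc) :
    ∀ L : List (List (Ev Op Proc)), projD p (interδ L) = interδ (L.map (proj p))
  | [] => rfl
  | [u] => by simp [interδ_single, projD_map_inl]
  | u :: v :: L => by
      rw [interδ_cons₂, projD_append, projD_cons_dd, projD_map_inl,
        projD_interδ p (v :: L)]
      simp [interδ_cons₂]

lemma forward (p₀ : Proc) :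
    ∀ (L : List (List (Ev Op Proc))), L ≠ [] → ∀ σ' : List (EvD Op Proc),
      (∀ p : Proc, projD p σ' = projD p (interδ L)) →
      ∃ L' : List (List (Ev Op Proc)),
        List.Forall₂ (fun u' u => ∀ p : Proc, proj p u' = proj p u) L' L ∧
        σ' = interδ L'
  | [], h, _, _ => absurd rfl h
  | [u], _, σ', hp => by
      have hdd : dd ∉ σ' := by
        intro hm
        have := dd_mem_projD (p := p₀) hm
        rw [hp p₀, interδ_single] at this
        exact dd_not_mem_map_inl _ (mem_of_mem_projD this)
      obtain ⟨a, ha⟩ := ddfree_eq_map_inl hdd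
      refine ⟨[a], List.forall₂_cons.2 ⟨fun p => ?_, List.Forall₂.nil⟩,
        by rw [ha, interδ_single]⟩
      have := hp p
      rw [ha, interδ_single, projD_map_inl, projD_map_inl] at this
      exact List.map_injective_iff.2 Sum.inl_injective this
  | u :: v :: L₀, _, σ', hp => by
      have hdd : dd ∈ σ' := by
        have : dd ∈ projD p₀ (interδ (u :: v :: L₀)) := by
          rw [interδ_cons₂]
          exact dd_mem_projD (by simp)
        rw [← hp p₀] at this
        exact mem_of_mem_projD this
      obtain ⟨a, b, hab, hna⟩ := first_split hdd
      have key : ∀ p : Proc, projD p a = (proj p u).map Sum.inl ∧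
          projD p b = projD p (interδ (v :: L₀)) := by
        intro p
        have := hp p
        rw [hab, interδ_cons₂, projD_append, projD_append, projD_cons_dd,
          projD_cons_dd, projD_map_inl] at this
        exact split_unique this
          (fun hm => hna (mem_of_mem_projD hm))
          (fun hm => dd_not_mem_map_inl _ hm)
      have hnaa : dd ∉ a := hna
      obtain ⟨a₀, ha₀⟩ := ddfree_eq_map_inl hnaa
      obtain ⟨L'', hF, hb⟩ := forward p₀ (v :: L₀) (by simp) b
        (fun p => (key p).2)
      obtain ⟨v', L₀', rfl⟩ : ∃ v' L₀', L'' = v' :: L₀' := by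
        cases L'' with
        | nil => exact absurd (List.Forall₂.length_eq hF) (by simp)
        | cons v' L₀' => exact ⟨v', L₀', rfl⟩
      refine ⟨a₀ :: v' :: L₀', List.forall₂_cons.2 ⟨fun p => ?_, hF⟩, ?_⟩
      · have := (key p).1
        rw [ha₀, projD_map_inl] at this
        exact List.map_injective_iff.2 Sum.inl_injective this
      · rw [hab, ha₀, hb, interδ_cons₂]

end Aux

/-- A word is ≈-equivalent to u₁ ++ [δ] ++ … ++ [δ] ++ u_m iff it has the form
u'₁ ++ [δ] ++ … ++ [δ] ++ u'_m with matching per-process projections blockwise. -/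
theorem approx_iff_blockwise [DecidableEq Proc] [Nonempty Proc]
    (L : List (List (Ev Op Proc))) (hm : 1 ≤ L.length) :
    ∀ σ' : List (EvD Op Proc),
      (∀ p : Proc, projD p σ' = projD p (interδ L)) ↔
        ∃ L' : List (List (Ev Op Proc)),
          List.Forall₂ (fun u' u => ∀ p : Proc, proj p u' = proj p u) L' L ∧
          σ' = interδ L' := by
  intro σ'
  constructor
  · intro hp
    exact forward (Classical.arbitrary Proc) L
      (by intro h; rw [h] at hm; simp at hm) σ' hp
  · rintro ⟨L', hF, rfl⟩ p
    rw [projD_interδ, projD_interδ]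
    congr 1
    clear hm
    induction hF with
    | nil => rfl
    | cons h _ ih => simp [ih, h p]
end

section
/- Let A be a type with decidable equality and let σ : List A satisfy σ.Nodup. Define the NFA M over alphabet A with state type Finset A, start set {∅}, accept set {σ.toFinset}, and step T e = {T ∪ {e}} if e ∈ σ.toFinset and e ∉ T, and step T e = ∅ otherwise. Then the language accepted by M is exactly the set of permutations of σ: M accepts a word w if and only if w.Perm σ. -/
/-- The NFA with states the finite subsets of the events of σ that accepts
exactly the permutations of σ. -/
def permNFA {A : Type*} [DecidableEq A] (σ : List A) : NFA A (Finset A) where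
  step := fun T e => if e ∈ σ.toFinset ∧ e ∉ T then {T ∪ {e}} else ∅
  start := {∅}
  accept := {σ.toFinset}

lemma permNFA_evalFrom {A : Type*} [DecidableEq A] (σ : List A) (w : List A) :
    (permNFA σ).evalFrom {∅} w =
      if w.Nodup ∧ ∀ a ∈ w, a ∈ σ.toFinset then {w.toFinset} else ∅ := by
  induction w using List.reverseRecOn with
  | nil => simp [NFA.evalFrom]
  | append_singleton w a ih =>
    have hiff : ((w ++ [a]).Nodup ∧ ∀ b ∈ w ++ [a], b ∈ σ.toFinset) ↔
        ((w.Nodup ∧ ∀ b ∈ w, b ∈ σ.toFinset) ∧ a ∈ σ.toFinset ∧ a ∉ w) := by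
      simp [List.nodup_append]
      aesop
    have hss : (permNFA σ).stepSet {w.toFinset} a = (permNFA σ).step w.toFinset a := by
      simp [NFA.stepSet]
    rw [NFA.evalFrom_append, NFA.evalFrom_singleton, ih]
    by_cases h : w.Nodup ∧ ∀ b ∈ w, b ∈ σ.toFinset
    · rw [if_pos h, hss]
      by_cases ha : a ∈ σ.toFinset ∧ a ∉ w
      · have haw : a ∉ w.toFinset := by simp [ha.2]
        rw [if_pos (hiff.2 ⟨h, ha⟩)]
        show (if a ∈ σ.toFinset ∧ a ∉ w.toFinset then ({w.toFinset ∪ {a}} : Set (Finset A))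
            else ∅) = {(w ++ [a]).toFinset}
        rw [if_pos ⟨ha.1, haw⟩]
        simp [Finset.union_comm]
      · rw [if_neg (fun hc => ha (hiff.1 hc).2)]
        show (if a ∈ σ.toFinset ∧ a ∉ w.toFinset then ({w.toFinset ∪ {a}} : Set (Finset A))
            else ∅) = ∅
        rw [if_neg (by simpa using ha)]
    · rw [if_neg h, if_neg (fun hc => h (hiff.1 hc).1)]
      simp [NFA.stepSet]

/-- The NFA `permNFA σ` accepts a word w iff w is a permutation of σ. -/
theorem permNFA_accepts_iff_perm {A : Type*} [DecidableEq A]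
    (σ : List A) (hσ : σ.Nodup) :
    ∀ w : List A, w ∈ (permNFA σ).accepts ↔ w.Perm σ := by
  intro w
  have : w ∈ (permNFA σ).accepts ↔ σ.toFinset ∈ (permNFA σ).evalFrom {∅} w := by
    constructor
    · rintro ⟨S, hS, hmem⟩
      have : S = σ.toFinset := hS
      rwa [this] at hmem
    · intro h
      exact ⟨σ.toFinset, rfl, h⟩
  rw [this, permNFA_evalFrom]
  constructor
  · intro hmem
    by_cases hc : w.Nodup ∧ ∀ a ∈ w, a ∈ σ.toFinset
    · rw [if_pos hc] at hmem
      have heq : σ.toFinset = w.toFinset := hmem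
      exact List.perm_of_nodup_nodup_toFinset_eq hc.1 hσ heq.symm
    · rw [if_neg hc] at hmem
      exact absurd hmem (Set.notMem_empty _)
  · intro hp
    have hnd : w.Nodup := hp.nodup_iff.2 hσ
    have hsub : ∀ a ∈ w, a ∈ σ.toFinset := fun a ha => by
      simp [hp.mem_iff.1 ha]
    rw [if_pos ⟨hnd, hsub⟩]
    show σ.toFinset = w.toFinset
    exact (List.toFinset_eq_of_perm _ _ hp).symm
end

section
/- Let σ = e₁ … e_k be a run over the event alphabet Σ whose events are pairwise distinct. For 1 ≤ i ≤ k let pre(σ, i) be the set of events e_j with j < i whose process equals the process of e_i. Define the NFA M over Σ with state type Finset Σ, start set {∅}, accept set {σ.toFinset}, and with a transition from state T reading e_i to state T ∪ {e_i} exactly when e_i ∉ T and pre(σ, i) ⊆ T (no other transitions). Then M accepts a word σ' if and only if π_p(σ') = π_p(σ) for every process p. -/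
variable {Op Proc : Type*}

/-- pre(σ, e): the events occurring in σ strictly before (the unique occurrence of) e
whose process equals the process of e. -/
def preSet [DecidableEq Op] [DecidableEq Proc] (σ : List (Ev Op Proc)) (e : Ev Op Proc) :
    Finset (Ev Op Proc) :=
  ((σ.takeWhile (fun x => x ≠ e)).filter (fun x => x.2.1 = e.2.1)).toFinset

/-- The NFA accepting exactly the process-order preserving permutations of σ:
from state T, reading event e of σ, move to T ∪ {e} exactly when e ∉ T and
pre(σ, e) ⊆ T. -/
def procPermNFA [DecidableEq Op] [DecidableEq Proc] (σ : List (Ev Op Proc)) :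
    NFA (Ev Op Proc) (Finset (Ev Op Proc)) where
  step := fun T e =>
    if e ∈ σ.toFinset ∧ e ∉ T ∧ preSet σ e ⊆ T then {T ∪ {e}} else ∅
  start := {∅}
  accept := {σ.toFinset}

section Aux
variable {α : Type*} [DecidableEq α]

lemma filter_takeWhile_comm (q : α → Bool) (e : α) (he : q e = true) :
    ∀ l : List α, (l.filter q).takeWhile (fun x => x ≠ e) =
      (l.takeWhile (fun x => x ≠ e)).filter q := by
  intro l
  induction l with
  | nil => simp
  | cons a l ih =>
    simp only [ne_eq, decide_not] at ih
    by_cases hae : a = e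
    · subst hae
      simp [List.filter_cons, he, List.takeWhile_cons]
    · simp only [List.filter_cons, List.takeWhile_cons, ne_eq, decide_not]
      cases hq : q a with
      | false => simpa [hq, hae] using ih
      | true => simp [hq, hae, ih]

lemma takeWhile_append_cons (u : List α) (e : α) (v : List α) (hu : e ∉ u) :
    (u ++ e :: v).takeWhile (fun x => x ≠ e) = u := by
  induction u with
  | nil => simp
  | cons a u ih =>
    simp only [List.mem_cons, not_or] at hu
    have ih' := ih hu.2
    simp only [ne_eq, decide_not] at ih'
    simp only [List.cons_append, List.takeWhile_cons, ne_eq, decide_not]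
    simp [Ne.symm hu.1, ih']

lemma append_cons_eq_of_nodup {u₁ v₁ u₂ v₂ : List α} {e : α}
    (h : u₁ ++ e :: v₁ = u₂ ++ e :: v₂) (h₁ : e ∉ u₁) (h₂ : e ∉ u₂) :
    u₁ = u₂ ∧ v₁ = v₂ := by
  have hu : u₁ = u₂ := by
    have h' := takeWhile_append_cons u₁ e v₁ h₁
    rw [h, takeWhile_append_cons u₂ e v₂ h₂] at h'
    exact h'.symm
  subst hu
  exact ⟨rfl, by simpa using h⟩

lemma perm_order_eq {l₁ : List α} (h1 : l₁.Nodup) :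
    ∀ l₂ : List α, l₁.Perm l₂ →
      (∀ u e v, l₂ = u ++ e :: v → ((l₁.takeWhile (fun x => x ≠ e)).toFinset : Finset α) ⊆ u.toFinset) →
      l₂ = l₁ := by
  induction l₁ with
  | nil => intro l₂ hp _; exact hp.symm.eq_nil
  | cons a t ih =>
    intro l₂ hp hord
    have hne : l₂ ≠ [] := by
      intro h; subst h; have := hp.eq_nil; simp at this
    obtain ⟨b, r, rfl⟩ := List.exists_cons_of_ne_nil hne
    have hba : b = a := by
      by_contra hba
      have h' := hord [] b r rfl
      have h2 : (a :: t).takeWhile (fun x => x ≠ b) = a :: t.takeWhile (fun x => x ≠ b) := by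
        simp only [List.takeWhile_cons, ne_eq, decide_not]
        simp [Ne.symm hba]
      rw [h2] at h'
      have : a ∈ (([] : List α).toFinset) := h' (by simp)
      simp at this
    subst hba
    have hnd : t.Nodup := (List.nodup_cons.mp h1).2
    have hat : b ∉ t := (List.nodup_cons.mp h1).1
    have hpr : t.Perm r := hp.cons_inv
    have hl2nd : (b :: r).Nodup := hp.nodup_iff.mp h1
    have har : b ∉ r := (List.nodup_cons.mp hl2nd).1
    have hrt : r = t := by
      apply ih hnd r hpr
      intro u e v huev
      have hea : e ≠ b := by
        rintro rfl
        exact har (by rw [huev]; simp)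
      have h3 := hord (b :: u) e v (by rw [huev]; rfl)
      rw [show (b :: t).takeWhile (fun x => x ≠ e) = b :: t.takeWhile (fun x => x ≠ e) by
        simp only [List.takeWhile_cons, ne_eq, decide_not]; simp [Ne.symm hea]] at h3
      intro x hx
      have hxt : x ∈ t := List.takeWhile_subset _ (List.mem_toFinset.mp hx)
      have hxa : x ≠ b := fun h => hat (h ▸ hxt)
      have h4 := h3 (List.mem_toFinset.mpr (List.mem_cons_of_mem b (List.mem_toFinset.mp hx)))
      simp only [List.toFinset_cons, Finset.mem_insert, List.mem_toFinset] at h4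
      rcases h4 with h | h
      · exact absurd h hxa
      · exact List.mem_toFinset.mpr h
    rw [hrt]
end Aux

section Main
variable [DecidableEq Op] [DecidableEq Proc]

def Good (σ w : List (Ev Op Proc)) : Prop :=
  ∀ u e v, w = u ++ e :: v → e ∈ σ ∧ e ∉ u ∧ preSet σ e ⊆ u.toFinset

lemma good_nil (σ : List (Ev Op Proc)) : Good σ [] := by
  intro u e v h; exact absurd h (by simp)

lemma good_append_singleton {σ w : List (Ev Op Proc)} {e : Ev Op Proc} :
    Good σ (w ++ [e]) ↔ Good σ w ∧ e ∈ σ ∧ e ∉ w ∧ preSet σ e ⊆ w.toFinset := by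
  constructor
  · intro h
    refine ⟨fun u x v huv => ?_, ?_⟩
    · have := h u x (v ++ [e]) (by rw [huv]; simp)
      exact this
    · have := h w e [] rfl
      simpa using this
  · rintro ⟨hg, he, hew, hpre⟩ u x v huv
    rcases List.eq_nil_or_concat v with rfl | ⟨v', e', rfl⟩
    · have h1 : w = u ∧ e = x := by
        have hl : w.length = u.length := by
          have := congrArg List.length huv; simpa using this
        have := List.append_inj huv hl
        simp at this
        exact ⟨this.1, this.2⟩
      obtain ⟨rfl, rfl⟩ := h1
      exact ⟨he, hew, hpre⟩
    · have huv' : w ++ [e] = (u ++ x :: v') ++ [e'] := by rw [huv]; simp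
      have h2 := List.append_inj' huv' (by simp)
      obtain ⟨rfl, h3⟩ := h2
      exact hg u x v' rfl

lemma eval_iff (σ : List (Ev Op Proc)) :
    ∀ (w : List (Ev Op Proc)) (S : Finset (Ev Op Proc)),
      S ∈ (procPermNFA σ).evalFrom {∅} w ↔ S = w.toFinset ∧ Good σ w := by
  intro w
  induction w using List.reverseRecOn with
  | nil =>
    intro S
    simp [NFA.evalFrom_nil, procPermNFA, good_nil]
  | append_singleton w e ih =>
    intro S
    rw [NFA.evalFrom_append, NFA.evalFrom_singleton, NFA.mem_stepSet]
    constructor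
    · rintro ⟨T, hT, hS⟩
      obtain ⟨rfl, hg⟩ := (ih T).mp hT
      simp only [procPermNFA] at hS
      split_ifs at hS with hc
      · simp only [Set.mem_singleton_iff] at hS
        obtain ⟨he, hew, hpre⟩ := hc
        refine ⟨by rw [hS]; simp [Finset.union_comm], ?_⟩
        rw [good_append_singleton]
        exact ⟨hg, List.mem_toFinset.mp he, fun h => hew (List.mem_toFinset.mpr h), hpre⟩
      · exact absurd hS (by simp)
    · rintro ⟨rfl, hg⟩
      rw [good_append_singleton] at hg
      obtain ⟨hg, he, hew, hpre⟩ := hg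
      refine ⟨w.toFinset, (ih _).mpr ⟨rfl, hg⟩, ?_⟩
      simp only [procPermNFA]
      rw [if_pos ⟨List.mem_toFinset.mpr he, fun h => hew (List.mem_toFinset.mp h), hpre⟩]
      simp [Finset.union_comm]

lemma good_nodup {σ : List (Ev Op Proc)} : ∀ {w}, Good σ w → w.Nodup := by
  intro w
  induction w using List.reverseRecOn with
  | nil => intro _; simp
  | append_singleton w e ih =>
    intro hg
    rw [good_append_singleton] at hg
    exact List.nodup_append_comm.mp (List.nodup_cons.mpr ⟨hg.2.2.1, ih hg.1⟩)

lemma preSet_eq_takeWhile_proj (σ : List (Ev Op Proc)) (e : Ev Op Proc) :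
    preSet σ e = ((proj e.2.1 σ).takeWhile (fun x => x ≠ e)).toFinset := by
  unfold preSet proj
  rw [filter_takeWhile_comm (fun x => decide (x.2.1 = e.2.1)) e (by simp)]

lemma proj_append_cons (p : Proc) (u : List (Ev Op Proc)) (e : Ev Op Proc)
    (v : List (Ev Op Proc)) (he : e.2.1 = p) :
    proj p (u ++ e :: v) = proj p u ++ e :: proj p v := by
  unfold proj
  rw [List.filter_append, List.filter_cons, if_pos (by simp [he])]

lemma mem_proj {p : Proc} {l : List (Ev Op Proc)} {x : Ev Op Proc} :
    x ∈ proj p l ↔ x ∈ l ∧ x.2.1 = p := by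
  unfold proj; simp

theorem main_iff (σ : List (Ev Op Proc)) (hσ : σ.Nodup) (σ' : List (Ev Op Proc)) :
    (σ'.toFinset = σ.toFinset ∧ Good σ σ') ↔ ∀ p : Proc, proj p σ' = proj p σ := by
  constructor
  · rintro ⟨hfs, hg⟩ p
    have hnd' : σ'.Nodup := good_nodup hg
    have hperm : σ'.Perm σ := by
      have := List.toFinset_eq_iff_perm_dedup.mp hfs
      rwa [hnd'.dedup, hσ.dedup] at this
    apply perm_order_eq (hσ.filter _) (proj p σ') (hperm.filter _).symm
    intro u e v huev
    have hep : e.2.1 = p := (mem_proj.mp (by rw [huev]; simp)).2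
    have heσ' : e ∈ σ' := (mem_proj.mp (by rw [huev]; simp)).1
    obtain ⟨u', v', rfl⟩ := List.append_of_mem heσ'
    have hnm := List.nodup_middle.mp hnd'
    have heu' : e ∉ u' := fun h => (List.nodup_cons.mp hnm).1 (by simp [h])
    have hproj : proj p (u' ++ e :: v') = proj p u' ++ e :: proj p v' :=
      proj_append_cons p u' e v' hep
    have heu : e ∉ u := by
      have : (u ++ e :: v).Nodup := by
        rw [← huev]; exact hnd'.filter _
      exact fun h => (List.nodup_cons.mp (List.nodup_middle.mp this)).1 (by simp [h])
    have hepu' : e ∉ proj p u' := fun h => heu' (mem_proj.mp h).1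
    have := append_cons_eq_of_nodup (huev.symm.trans hproj) heu hepu'
    obtain ⟨rfl, rfl⟩ := this
    intro x hx
    have hx' : x ∈ preSet σ e := by
      rw [preSet_eq_takeWhile_proj, hep]; exact hx
    have hxu' : x ∈ u' := List.mem_toFinset.mp ((hg u' e v' rfl).2.2 hx')
    have hxp : x.2.1 = p := by
      have : x ∈ (proj p σ).takeWhile (fun x => x ≠ e) := List.mem_toFinset.mp hx
      exact (mem_proj.mp (List.takeWhile_subset _ this)).2
    exact List.mem_toFinset.mpr (mem_proj.mpr ⟨hxu', hxp⟩)
  · intro hproj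
    have hnd' : σ'.Nodup := by
      rw [List.nodup_iff_sublist]
      intro x hxx
      have h1 : List.Sublist [x, x] (proj x.2.1 σ') := by
        have := hxx.filter (fun e => decide (e.2.1 = x.2.1))
        simpa [proj] using this
      rw [hproj] at h1
      exact (List.nodup_iff_sublist.mp (hσ.filter _)) x h1
    have hfs : σ'.toFinset = σ.toFinset := by
      ext x
      simp only [List.mem_toFinset]
      constructor
      · intro h
        exact (mem_proj.mp ((hproj x.2.1) ▸ mem_proj.mpr ⟨h, rfl⟩)).1
      · intro h
        exact (mem_proj.mp ((hproj x.2.1).symm ▸ mem_proj.mpr ⟨h, rfl⟩)).1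
    have hperm : σ'.Perm σ := by
      have := List.toFinset_eq_iff_perm_dedup.mp hfs
      rwa [hnd'.dedup, hσ.dedup] at this
    refine ⟨hfs, ?_⟩
    rintro u e v rfl
    have hnm := List.nodup_middle.mp hnd'
    have heu : e ∉ u := fun h => (List.nodup_cons.mp hnm).1 (by simp [h])
    refine ⟨hperm.subset (by simp), heu, ?_⟩
    intro x hx
    set p := e.2.1 with hp
    rw [preSet_eq_takeWhile_proj, ← hproj, proj_append_cons p u e v rfl,
        takeWhile_append_cons _ _ _ (fun h => heu (mem_proj.mp h).1)] at hx
    exact List.mem_toFinset.mpr (mem_proj.mp (List.mem_toFinset.mp hx)).1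

end Main

/-- For σ with pairwise distinct events, procPermNFA σ accepts σ' iff σ' has the same
per-process projections as σ. -/
theorem procPermNFA_accepts_iff_proj_eq [DecidableEq Op] [DecidableEq Proc]
    (σ : List (Ev Op Proc)) (hσ : σ.Nodup) :
    ∀ σ' : List (Ev Op Proc),
      σ' ∈ (procPermNFA σ).accepts ↔ ∀ p : Proc, proj p σ' = proj p σ := by
  intro σ'
  rw [NFA.mem_accepts]
  constructor
  · rintro ⟨S, hS, hev⟩
    have hS' : S = σ.toFinset := by simpa [procPermNFA] using hS
    subst hS'
    have h := (eval_iff σ σ' _).mp hev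
    exact (main_iff σ hσ σ').mp ⟨h.1.symm, h.2⟩
  · intro h
    obtain ⟨hfs, hg⟩ := (main_iff σ hσ σ').mpr h
    exact ⟨σ.toFinset, by simp [procPermNFA],
      (eval_iff σ σ' σ.toFinset).mpr ⟨hfs.symm, hg⟩⟩
end

section
/- Let L_S be a language over Σ such that every word in L_S is sequential and quiescent. Let σ = σ₁ ++ … ++ σ_k be a legal quiescent run in which each σ_i is non-empty, legal, and end-to-end quiescent, and let σ^δ = [δ] ++ σ₁ ++ [δ] ++ σ₂ ++ [δ] ++ … ++ [δ] ++ σ_k ++ [δ]. Then there exist runs τ₁, …, τ_k with τ_i a permutation (List.Perm) of σ_i for each 1 ≤ i ≤ k and τ₁ ++ … ++ τ_k ∈ L_S, if and only if σ^δ ∈ 𝓛_U(S_δ). -/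
variable {Op Proc : Type*}

/-- π_Σ: remove all occurrences of δ. -/
def piSigma (w : List (EvD Op Proc)) : List (Ev Op Proc) :=
  w.filterMap Sum.getLeft?

/-- S_δ: the words over Σ_δ whose δ-erasure is in L_S and all of whose prefixes
ending in δ have quiescent δ-erasure. -/
def Sdelta (L_S : Set (List (Ev Op Proc))) : Set (List (EvD Op Proc)) :=
  {w | piSigma w ∈ L_S ∧ ∀ u : List (EvD Op Proc), u ++ [dd] <+: w → Quiescent (piSigma u)}

/-- The universal independence relation on Σ_δ: any two events from Σ commute. -/
def IndepU (x y : EvD Op Proc) : Prop :=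
  ∃ a b : Ev Op Proc, x = Sum.inl a ∧ y = Sum.inl b

/-- 𝓛_U(L): closure of L under swaps of adjacent Σ-letters. -/
def LU (L : Set (List (EvD Op Proc))) : Set (List (EvD Op Proc)) :=
  {w' | ∃ w ∈ L, Relation.ReflTransGen (SwapStep (IndepU (Op := Op) (Proc := Proc))) w w'}

/-- The word [δ] ++ σ₁ ++ [δ] ++ σ₂ ++ [δ] ++ … ++ [δ] ++ σ_k ++ [δ]. -/
def sigmaDelta (L : List (List (Ev Op Proc))) : List (EvD Op Proc) :=
  [dd] ++ List.intercalate [dd] (L.map (List.map Sum.inl)) ++ [dd]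

section Aux
open List

/-! ### Generic list lemmas -/

lemma intercalate_cons' {α : Type*} (s : List α) :
    ∀ (X : List (List α)) (x : List α),
      List.intercalate s (x :: X) = x ++ X.flatMap (fun y => s ++ y) := by
  intro X
  induction X with
  | nil => intro x; simp [List.intercalate]
  | cons y X ih => intro x; simp [List.intercalate, List.intersperse] at ih ⊢; simp [ih]

lemma forall₂_perm_trans {α : Type*} :
    ∀ {a b c : List (List α)}, List.Forall₂ List.Perm a b → List.Forall₂ List.Perm b c →
      List.Forall₂ List.Perm a c := by
  intro a b c h1
  induction h1 generalizing c with
  | nil => intro h2; cases h2; exact .nil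
  | cons h hs ih => intro h2; cases h2 with
    | cons h' hs' => exact .cons (h.trans h') (ih hs')

lemma forall₂_snoc_right {α β : Type*} {R : α → β → Prop} :
    ∀ {xs : List α} {ys : List β} {y : β}, List.Forall₂ R xs (ys ++ [y]) →
      ∃ xs' x, xs = xs' ++ [x] ∧ List.Forall₂ R xs' ys ∧ R x y := by
  intro xs ys
  induction ys generalizing xs with
  | nil => intro y h; cases h with
    | cons h h2 => cases h2; exact ⟨[], _, rfl, .nil, h⟩
  | cons z ys ih =>
    intro y h
    cases h with
    | cons h h2 =>
      obtain ⟨xs', x, rfl, h3, h4⟩ := ih h2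
      exact ⟨_ :: xs', x, rfl, .cons h h3, h4⟩

lemma forall₂_exists_left {α β : Type*} {R : α → β → Prop} :
    ∀ {xs : List α} {ys : List β}, List.Forall₂ R xs ys → ∀ x ∈ xs, ∃ y ∈ ys, R x y := by
  intro xs ys h
  induction h with
  | nil => simp
  | cons h hs ih =>
    intro x hx
    rcases List.mem_cons.1 hx with rfl | hx
    · exact ⟨_, List.mem_cons_self, h⟩
    · obtain ⟨y, hy, hr⟩ := ih x hx
      exact ⟨y, List.mem_cons_of_mem _ hy, hr⟩

lemma filter_split {α : Type*} {P : α → Bool} :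
    ∀ (σ u₁ u₂ : List α) (e), σ.filter P = u₁ ++ e :: u₂ →
      ∃ σ₁ σ₂, σ = σ₁ ++ e :: σ₂ ∧ σ₂.filter P = u₂ := by
  intro σ
  induction σ with
  | nil => intro u₁ u₂ e h; exact absurd h.symm (by simp)
  | cons x σ ih =>
    intro u₁ u₂ e h
    rw [List.filter_cons] at h
    by_cases hx : P x
    · rw [if_pos hx] at h
      cases u₁ with
      | nil =>
        simp only [List.nil_append, List.cons.injEq] at h
        obtain ⟨rfl, h2⟩ := h
        exact ⟨[], σ, rfl, h2⟩
      | cons y u₁' =>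
        simp only [List.cons_append, List.cons.injEq] at h
        obtain ⟨rfl, h2⟩ := h
        obtain ⟨σ₁, σ₂, rfl, h3⟩ := ih u₁' u₂ e h2
        exact ⟨x :: σ₁, σ₂, rfl, h3⟩
    · rw [if_neg hx] at h
      obtain ⟨σ₁, σ₂, rfl, h3⟩ := ih u₁ u₂ e h
      exact ⟨x :: σ₁, σ₂, rfl, h3⟩

/-! ### Quiescence lemmas -/

lemma quiescent_nil : Quiescent ([] : List (Ev Op Proc)) := by
  intro σ₁ e σ₂ h
  exact absurd h (by simp)

lemma quiescent_proj [DecidableEq Proc] (p : Proc) {σ : List (Ev Op Proc)}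
    (hq : Quiescent σ) : Quiescent (proj p σ) := by
  intro u₁ e u₂ h he
  obtain ⟨σ₁, σ₂, rfl, h2⟩ := filter_split σ u₁ u₂ e h
  obtain ⟨e', he', hm⟩ := hq σ₁ e σ₂ rfl he
  have hep : e.2.1 = p := by
    have hmem : e ∈ proj p (σ₁ ++ e :: σ₂) := by rw [h]; simp
    simpa [proj] using (List.mem_filter.1 hmem).2
  refine ⟨e', ?_, hm⟩
  rw [← h2]
  exact List.mem_filter.2 ⟨he', by simp [← hm.2.1, hep]⟩

lemma even_of_seq_quiescent {σ : List (Ev Op Proc)}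
    (hs : SequentialRun σ) (hq : Quiescent σ) : 2 ∣ σ.length := by
  rcases hs with rfl | ⟨_, _, h3⟩
  · simp
  · rcases Nat.even_or_odd σ.length with he | ho
    · exact he.two_dvd
    · exfalso
      have hodd : σ.length % 2 = 1 := Nat.odd_iff.1 ho
      obtain ⟨hlt, hinv⟩ := h3 (by omega)
      have hne : σ ≠ [] := by
        intro h; subst h; simp at hlt
      obtain ⟨e', he', _⟩ := hq σ.dropLast (σ.getLast hne) []
        ((List.dropLast_append_getLast hne).symm)
        (by rw [List.getLast_eq_getElem]; exact hinv)
      simp at he'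

lemma length_eq_sum_proj [DecidableEq Proc] (σ : List (Ev Op Proc)) (s : Finset Proc)
    (hs : ∀ e ∈ σ, e.2.1 ∈ s) : σ.length = ∑ p ∈ s, (proj p σ).length := by
  induction σ with
  | nil => simp [proj]
  | cons e σ ih =>
    have h1 : ∀ p, (proj p (e :: σ)).length
        = (if e.2.1 = p then 1 else 0) + (proj p σ).length := by
      intro p
      by_cases h : e.2.1 = p <;> simp [proj, List.filter_cons, h, Nat.add_comm]
    rw [List.length_cons, ih (fun e' he' => hs e' (List.mem_cons_of_mem _ he'))]
    simp only [h1]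
    rw [Finset.sum_add_distrib, Finset.sum_ite_eq s e.2.1 (fun _ => 1),
      if_pos (hs e (List.mem_cons_self)), add_comm]

lemma even_of_legal_quiescent [DecidableEq Proc] {σ : List (Ev Op Proc)}
    (hl : Legal σ) (hq : Quiescent σ) : 2 ∣ σ.length := by
  rw [length_eq_sum_proj σ ((σ.map (fun e => e.2.1)).toFinset)
    (by intro e he; simp only [List.mem_toFinset, List.mem_map]; exact ⟨e, he, rfl⟩)]
  exact Finset.dvd_sum fun p _ => even_of_seq_quiescent (hl p) (quiescent_proj p hq)

lemma quiescent_prefix_even {σ u : List (Ev Op Proc)}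
    (hs : SequentialRun σ) (hpre : u <+: σ) (heven : 2 ∣ u.length) : Quiescent u := by
  intro u₁ e u₂ hu he
  subst hu
  have hiu : u₁.length < (u₁ ++ e :: u₂).length := by simp
  have hiσ : u₁.length < σ.length := lt_of_lt_of_le hiu hpre.length_le
  have hue : (u₁ ++ e :: u₂)[u₁.length]'hiu = e := by
    rw [List.getElem_append_right (le_refl _)]
    simp
  have hσe : σ[u₁.length]'hiσ = e := ((hpre.getElem hiu).symm).trans hue
  rcases hs with h | ⟨_, h2, _⟩
  · subst h; simp at hiσ
  have hieven : u₁.length % 2 = 0 := by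
    by_contra hodd
    have h1 : u₁.length % 2 = 1 := by omega
    obtain ⟨i, hi⟩ : ∃ i, u₁.length = i + 1 := ⟨u₁.length - 1, by omega⟩
    have hlt : i + 1 < σ.length := by omega
    have hmm := (h2 i (by omega) hlt).2.2.2
    have hgc : σ[i + 1]'hlt = σ[u₁.length]'hiσ := by congr 1; omega
    rw [hgc, hσe] at hmm
    exact absurd he (by simp [IsInv, hmm])
  have hl2 : 2 ∣ (u₁ ++ e :: u₂).length := heven
  have hlen : (u₁ ++ e :: u₂).length = u₁.length + 1 + u₂.length := by
    simp only [List.length_append, List.length_cons]; omega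
  have hi1u : u₁.length + 1 < (u₁ ++ e :: u₂).length := by
    rcases hl2 with ⟨m, hm⟩; omega
  have hi1σ : u₁.length + 1 < σ.length := lt_of_lt_of_le hi1u hpre.length_le
  have hmatch := h2 u₁.length hieven hi1σ
  rw [hσe] at hmatch
  have hu2len : 0 < u₂.length := by omega
  have hu2 : (u₁ ++ e :: u₂)[u₁.length + 1]'hi1u = u₂[0]'hu2len := by
    rw [List.getElem_append_right (by omega)]
    simp
  refine ⟨u₂[0]'hu2len, List.getElem_mem _, ?_⟩
  rw [← hu2, hpre.getElem hi1u]
  exact hmatch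

lemma flatten_even {X : List (List (Ev Op Proc))} (h : ∀ t ∈ X, 2 ∣ t.length) :
    2 ∣ X.flatten.length := by
  induction X with
  | nil => simp
  | cons t X ih =>
    rw [List.flatten_cons, List.length_append]
    exact Nat.dvd_add (h t (List.mem_cons_self))
      (ih fun t' ht' => h t' (List.mem_cons_of_mem _ ht'))

end Aux
section Blocks

variable {Op Proc : Type*}

/-- Decompose a word over Σ_δ into the blocks of Σ-letters separated by δ's. -/
def blocks : List (EvD Op Proc) → List (List (Ev Op Proc))
  | [] => [[]]
  | Sum.inl a :: w => (a :: (blocks w).headI) :: (blocks w).tail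
  | Sum.inr _ :: w => [] :: blocks w

lemma blocks_exists (w : List (EvD Op Proc)) : ∃ h t, blocks w = h :: t := by
  cases w with
  | nil => exact ⟨[], [], rfl⟩
  | cons x w => cases x with
    | inl a => exact ⟨_, _, rfl⟩
    | inr u => exact ⟨_, _, rfl⟩

lemma blocks_map_inl_append (l : List (Ev Op Proc)) (w : List (EvD Op Proc)) :
    blocks (l.map Sum.inl ++ w) = (l ++ (blocks w).headI) :: (blocks w).tail := by
  induction l with
  | nil =>
    obtain ⟨h, t, hb⟩ := blocks_exists w
    simp [hb]
  | cons a l ih => simp [blocks, ih]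

lemma piSigma_cons_inl (a : Ev Op Proc) (w : List (EvD Op Proc)) :
    piSigma (Sum.inl a :: w) = a :: piSigma w := by
  simp [piSigma]

lemma piSigma_cons_dd (w : List (EvD Op Proc)) :
    piSigma ((dd : EvD Op Proc) :: w) = piSigma w := by
  simp [piSigma, dd, List.filterMap_cons]

lemma piSigma_blocks (w : List (EvD Op Proc)) : piSigma w = (blocks w).flatten := by
  induction w with
  | nil => simp [piSigma, blocks]
  | cons x w ih =>
    cases x with
    | inl a =>
      obtain ⟨h, t, hb⟩ := blocks_exists w
      rw [piSigma_cons_inl, ih, hb]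
      simp [blocks, hb]
    | inr u =>
      rw [show (Sum.inr u : EvD Op Proc) = dd from rfl, piSigma_cons_dd, ih]
      simp [blocks, dd]

/-- Reassemble a word from its blocks. -/
def decb : List (List (Ev Op Proc)) → List (EvD Op Proc)
  | [] => []
  | b :: bs => b.map Sum.inl ++ bs.flatMap (fun c => dd :: c.map Sum.inl)

/-- The tail representation: δ before each block. -/
def repb (T : List (List (Ev Op Proc))) : List (EvD Op Proc) :=
  T.flatMap (fun c => dd :: c.map Sum.inl)

lemma decb_nil_cons (X : List (List (Ev Op Proc))) : decb ([] :: X) = repb X := by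
  simp [decb, repb]

lemma repb_append (X Y : List (List (Ev Op Proc))) :
    repb (X ++ Y) = repb X ++ repb Y := by
  simp [repb]

lemma repb_cons (c : List (Ev Op Proc)) (X : List (List (Ev Op Proc))) :
    repb (c :: X) = dd :: (c.map Sum.inl ++ repb X) := by
  simp [repb]

lemma decb_blocks (w : List (EvD Op Proc)) : decb (blocks w) = w := by
  induction w with
  | nil => rfl
  | cons x w ih =>
    cases x with
    | inl a =>
      obtain ⟨h, t, hb⟩ := blocks_exists w
      rw [hb] at ih
      simp only [blocks, hb]
      simp only [decb, List.headI, List.tail, List.map_cons, List.cons_append]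
      rw [show (h.map Sum.inl ++ t.flatMap (fun c => dd :: c.map Sum.inl)) = decb (h :: t) from rfl, ih]
    | inr u =>
      obtain ⟨h, t, hb⟩ := blocks_exists w
      rw [hb] at ih
      simp only [blocks, hb]
      rw [decb_nil_cons, repb_cons,
        show (List.map Sum.inl h ++ repb t : List (EvD Op Proc)) = decb (h :: t) from rfl, ih]
      rfl

lemma blocks_decb : ∀ (bs : List (List (Ev Op Proc))) (b : List (Ev Op Proc)),
    blocks (decb (b :: bs)) = b :: bs := by
  intro bs
  induction bs with
  | nil =>
    intro b
    rw [show (decb [b] : List (EvD Op Proc)) = List.map Sum.inl b ++ [] by simp [decb]]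
    rw [blocks_map_inl_append]
    simp [blocks]
  | cons c bs ih =>
    intro b
    have h1 : decb (b :: c :: bs) = b.map Sum.inl ++ ((dd : EvD Op Proc) :: decb (c :: bs)) := by
      simp [decb]
    rw [h1, blocks_map_inl_append]
    have h2 : blocks ((dd : EvD Op Proc) :: decb (c :: bs)) = [] :: blocks (decb (c :: bs)) := rfl
    rw [h2, ih c]
    simp

lemma piSigma_repb (T : List (List (Ev Op Proc))) : piSigma (repb T) = T.flatten := by
  induction T with
  | nil => simp [repb, piSigma]
  | cons c T ih =>
    rw [repb_cons]
    rw [show ((dd : EvD Op Proc) :: (List.map Sum.inl c ++ repb T))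
      = ([dd] ++ List.map Sum.inl c) ++ repb T from by simp]
    unfold piSigma at ih ⊢
    rw [List.filterMap_append, ih]
    simp [dd, List.filterMap_map, Function.comp_def, List.filterMap_cons]

lemma sigmaDelta_cons (l : List (Ev Op Proc)) (L : List (List (Ev Op Proc))) :
    sigmaDelta (l :: L) = repb (l :: L) ++ [dd] := by
  rw [sigmaDelta, List.map_cons, intercalate_cons', repb_cons, List.flatMap_map]
  rfl

lemma blocks_sigmaDelta_cons (l : List (Ev Op Proc)) (L : List (List (Ev Op Proc))) :
    blocks (sigmaDelta (l :: L)) = [] :: (l :: L) ++ [[]] := by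
  have h : sigmaDelta (l :: L) = decb ([] :: ((l :: L) ++ [[]])) := by
    rw [decb_nil_cons, repb_append, sigmaDelta_cons]
    rfl
  rw [h, blocks_decb]
  rfl

end Blocks
section Swap

variable {Op Proc : Type*}

lemma swap_blocks_aux (a b : Ev Op Proc) :
    ∀ (u v : List (EvD Op Proc)),
      List.Forall₂ List.Perm (blocks (u ++ Sum.inl a :: Sum.inl b :: v))
        (blocks (u ++ Sum.inl b :: Sum.inl a :: v)) := by
  intro u
  induction u with
  | nil =>
    intro v
    obtain ⟨h, t, hb⟩ := blocks_exists v
    simp only [List.nil_append, blocks, hb, List.headI, List.tail]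
    exact .cons (List.Perm.swap b a h) (List.forall₂_same.2 fun x _ => List.Perm.refl x)
  | cons x u ih =>
    intro v
    cases x with
    | inl c =>
      obtain ⟨h1, t1, hb1⟩ := blocks_exists (u ++ Sum.inl a :: Sum.inl b :: v)
      obtain ⟨h2, t2, hb2⟩ := blocks_exists (u ++ Sum.inl b :: Sum.inl a :: v)
      have hF := ih v
      rw [hb1, hb2] at hF
      cases hF with
      | cons hp ht =>
        have e1 : blocks (Sum.inl c :: (u ++ Sum.inl a :: Sum.inl b :: v)) = (c :: h1) :: t1 := by
          have := blocks_map_inl_append [c] (u ++ Sum.inl a :: Sum.inl b :: v)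
          simpa [hb1] using this
        have e2 : blocks (Sum.inl c :: (u ++ Sum.inl b :: Sum.inl a :: v)) = (c :: h2) :: t2 := by
          have := blocks_map_inl_append [c] (u ++ Sum.inl b :: Sum.inl a :: v)
          simpa [hb2] using this
        rw [List.cons_append, List.cons_append, e1, e2]
        exact .cons (hp.cons c) ht
    | inr uu =>
      simp only [List.cons_append, blocks]
      exact .cons (List.Perm.refl _) (ih v)

lemma swapStep_blocks {w w' : List (EvD Op Proc)}
    (h : SwapStep (IndepU (Op := Op) (Proc := Proc)) w w') :
    List.Forall₂ List.Perm (blocks w) (blocks w') := by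
  cases h with
  | swap u v x y hI =>
    obtain ⟨a, b, rfl, rfl⟩ := hI
    exact swap_blocks_aux a b u v

lemma rtg_blocks {w w' : List (EvD Op Proc)}
    (h : Relation.ReflTransGen (SwapStep (IndepU (Op := Op) (Proc := Proc))) w w') :
    List.Forall₂ List.Perm (blocks w) (blocks w') := by
  induction h with
  | refl => exact List.forall₂_same.2 fun x _ => List.Perm.refl x
  | tail _ h2 ih => exact forall₂_perm_trans ih (swapStep_blocks h2)

lemma perm_rtg {t s : List (Ev Op Proc)} (h : t.Perm s) :
    ∀ u v : List (EvD Op Proc),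
      Relation.ReflTransGen (SwapStep (IndepU (Op := Op) (Proc := Proc)))
        (u ++ t.map Sum.inl ++ v) (u ++ s.map Sum.inl ++ v) := by
  induction h with
  | nil => intro u v; exact .refl
  | cons x _ ih =>
    intro u v
    have := ih (u ++ [Sum.inl x]) v
    simpa [List.append_assoc] using this
  | swap x y l =>
    intro u v
    have hstep := SwapStep.swap (I := IndepU (Op := Op) (Proc := Proc))
      u (l.map Sum.inl ++ v) (Sum.inl y) (Sum.inl x) ⟨y, x, rfl, rfl⟩
    refine Relation.ReflTransGen.single ?_
    simpa [List.append_assoc] using hstep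
  | trans _ _ ih1 ih2 =>
    intro u v
    exact (ih1 u v).trans (ih2 u v)

lemma chain_repb : ∀ {T L : List (List (Ev Op Proc))}, List.Forall₂ List.Perm T L →
    ∀ u : List (EvD Op Proc),
      Relation.ReflTransGen (SwapStep (IndepU (Op := Op) (Proc := Proc)))
        (u ++ repb T ++ [dd]) (u ++ repb L ++ [dd]) := by
  intro T L h
  induction h with
  | nil => intro u; exact .refl
  | @cons t l T' L' htl hTL ih =>
    intro u
    have s1 := perm_rtg htl (u ++ [dd]) (repb T' ++ [dd])
    have s2 := ih (u ++ [dd] ++ l.map Sum.inl)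
    rw [repb_cons, repb_cons]
    simp only [List.append_assoc, List.cons_append, List.singleton_append] at s1 s2 ⊢
    exact s1.trans s2
  
/-! ### Prefix analysis of `repb T ++ [dd]` -/

lemma prefix_through_map (c : List (Ev Op Proc)) (v : List (EvD Op Proc)) :
    ∀ u, u ++ [dd] <+: c.map Sum.inl ++ v →
      ∃ u', u = c.map Sum.inl ++ u' ∧ u' ++ [dd] <+: v := by
  induction c with
  | nil => intro u h; exact ⟨u, by simp, by simpa using h⟩
  | cons a c ih =>
    intro u h
    cases u with
    | nil =>
      rw [List.nil_append, List.map_cons, List.cons_append, List.cons_prefix_cons] at h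
      exact absurd h.1 (by simp [dd])
    | cons x u' =>
      rw [List.cons_append, List.map_cons, List.cons_append, List.cons_prefix_cons] at h
      obtain ⟨rfl, h⟩ := h
      obtain ⟨u'', rfl, h2⟩ := ih u' h
      exact ⟨u'', by simp, h2⟩

lemma prefix_repb : ∀ (T : List (List (Ev Op Proc))) (u : List (EvD Op Proc)),
    u ++ [dd] <+: repb T ++ [dd] → ∃ j, piSigma u = (T.take j).flatten := by
  intro T
  induction T with
  | nil =>
    intro u h
    have hlen : u.length + 1 ≤ 1 := by simpa [repb] using h.length_le
    have : u = [] := List.eq_nil_of_length_eq_zero (by omega)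
    subst this
    exact ⟨0, by simp [piSigma]⟩
  | cons c T ih =>
    intro u h
    rw [repb_cons] at h
    cases u with
    | nil => exact ⟨0, by simp [piSigma]⟩
    | cons x u' =>
      rw [List.cons_append, List.cons_append, List.cons_prefix_cons] at h
      obtain ⟨rfl, h⟩ := h
      rw [List.append_assoc] at h
      obtain ⟨u'', rfl, h2⟩ := prefix_through_map c (repb T ++ [dd]) u' h
      obtain ⟨j, hj⟩ := ih u'' h2
      refine ⟨j + 1, ?_⟩
      rw [piSigma_cons_dd]
      unfold piSigma at hj ⊢
      rw [List.filterMap_append, hj]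
      simp [List.filterMap_map, Function.comp_def, List.take_cons]

end Swap
lemma forall₂_flatten_perm {α : Type*} {X Y : List (List α)}
    (h : List.Forall₂ List.Perm X Y) : X.flatten.Perm Y.flatten := by
  induction h with
  | nil => exact List.Perm.refl _
  | cons h _ ih => simpa using h.append ih

/-- Membership: σ is allowed by L_S under quiescent consistency iff
σ^δ ∈ 𝓛_U(S_δ). -/
theorem qc_allowed_iff_mem_LU_Sdelta [DecidableEq Proc]
    (L_S : Set (List (Ev Op Proc)))
    (hLS : ∀ w ∈ L_S, SequentialRun w ∧ Quiescent w)
    (L : List (List (Ev Op Proc)))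
    (hlegal : Legal L.flatten) (hquies : Quiescent L.flatten)
    (hpieces : ∀ u ∈ L, u ≠ [] ∧ Legal u ∧ ETEQ u) :
    (∃ T : List (List (Ev Op Proc)),
        List.Forall₂ (fun t s => t.Perm s) T L ∧ T.flatten ∈ L_S) ↔
      sigmaDelta L ∈ LU (Sdelta L_S) := by
  constructor
  · rintro ⟨T, hTL, hTS⟩
    obtain ⟨hseq, hq⟩ := hLS _ hTS
    have hTeven : ∀ t ∈ T, 2 ∣ t.length := by
      intro t ht
      obtain ⟨s, hsL, hperm⟩ := forall₂_exists_left hTL t ht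
      obtain ⟨-, hlegal_s, hET⟩ := hpieces s hsL
      rw [hperm.length_eq]
      exact even_of_legal_quiescent hlegal_s hET.1
    have hquies_take : ∀ j, Quiescent ((T.take j).flatten) := by
      intro j
      refine quiescent_prefix_even hseq ⟨(T.drop j).flatten, ?_⟩
        (flatten_even fun t ht => hTeven t (List.mem_of_mem_take ht))
      rw [← List.flatten_append, List.take_append_drop]
    cases L with
    | nil =>
      have hT : T = [] := List.forall₂_nil_right_iff.1 hTL
      subst hT
      have hsd : sigmaDelta ([] : List (List (Ev Op Proc))) = [dd, dd] := rfl
      refine ⟨sigmaDelta [], ⟨?_, ?_⟩, Relation.ReflTransGen.refl⟩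
      · rw [hsd]
        simpa [piSigma, dd, List.filterMap_cons] using hTS
      · intro u hu
        rw [hsd] at hu
        have hsub : ∀ x ∈ u, x = (dd : EvD Op Proc) := by
          intro x hx
          have hu' : u <+: [dd, dd] := ((u.prefix_append [dd]).trans hu)
          have := hu'.subset hx
          simp at this
          simpa using this
        have hnil : piSigma u = [] := by
          rw [piSigma, List.filterMap_eq_nil_iff]
          intro a ha
          rw [hsub a ha]
          rfl
        rw [hnil]
        exact quiescent_nil
    | cons l L' =>
      obtain ⟨t, T', hperm, hF, rfl⟩ := List.forall₂_cons_right_iff.1 hTL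
      refine ⟨sigmaDelta (t :: T'), ⟨?_, ?_⟩, ?_⟩
      · rw [sigmaDelta_cons]
        unfold piSigma
        rw [List.filterMap_append]
        have hp := piSigma_repb (t :: T')
        unfold piSigma at hp
        rw [hp]
        simpa [dd, List.filterMap_cons] using hTS
      · intro u hu
        rw [sigmaDelta_cons] at hu
        obtain ⟨j, hj⟩ := prefix_repb (t :: T') u hu
        rw [hj]
        exact hquies_take j
      · rw [sigmaDelta_cons, sigmaDelta_cons]
        have := chain_repb (List.Forall₂.cons hperm hF) ([] : List (EvD Op Proc))
        simpa using this
  · rintro ⟨w, ⟨hwS, hwpre⟩, hrtg⟩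
    have hblocks := rtg_blocks hrtg
    cases L with
    | nil =>
      have hsd : blocks (sigmaDelta ([] : List (List (Ev Op Proc)))) = [[], [], []] := rfl
      rw [hsd] at hblocks
      refine ⟨[], .nil, ?_⟩
      have hnil : piSigma w = [] := by
        rw [piSigma_blocks]
        have := forall₂_flatten_perm hblocks
        simpa using this.eq_nil
      rw [hnil] at hwS
      simpa using hwS
    | cons l L' =>
      rw [blocks_sigmaDelta_cons] at hblocks
      obtain ⟨b0, rest, hb⟩ := blocks_exists w
      rw [hb] at hblocks
      cases hblocks with
      | cons h0 hrest =>
        obtain ⟨B, blast, hreq, hBF, hlastP⟩ := forall₂_snoc_right hrest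
        refine ⟨B, hBF, ?_⟩
        have hfl : piSigma w = B.flatten := by
          rw [piSigma_blocks, hb, hreq, h0.eq_nil, hlastP.eq_nil]
          simp
        rw [← hfl]
        exact hwS
end
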